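/- Let A, B be directed graphs on a vertex set V with A ∩ Bᵀ = I. Define A' = A ∩ B and B' = A ∪ B. Then A' ∩ B'ᵀ = I, A' ⊆ B', and for every vertex v, A'B'(v) ∪ B'A'(v) ⊆ AB(v) ∪ BA(v), |A'(v)| + |B'(v)| = |A(v)| + |B(v)|. Consequently, if the conjecture '∃v with |(A'B' ∪ B'A')(v)| ≥ |A'(v)| + |B'(v)| − 1' holds, then ∃v with |(AB ∪ BA)(v)| ≥ |A(v)| + |B(v)| − 1. -/

import Mathlib

open Finset
open scoped Classical
noncomputable section

/-- Out-neighbourhood of `v` in the digraph/relation `A`. -/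
def outs {V : Type} [Fintype V] (A : V → V → Prop) (v : V) : Finset V :=
  Finset.univ.filter (fun u => A v u)

/-- In-neighbourhood of `v` in the digraph/relation `A`. -/
def ins {V : Type} [Fintype V] (A : V → V → Prop) (v : V) : Finset V :=
  Finset.univ.filter (fun u => A u v)

/-- Second out-neighbourhood: `(⋃_{u ∈ N⁺(v)} N⁺(u)) \ N⁺(v)`. -/
def souts {V : Type} [Fintype V] (A : V → V → Prop) (v : V) : Finset V :=
  (Finset.univ.filter (fun w => ∃ u, A v u ∧ A u w)) \ outs A v

/-- Relational product `AB`. -/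
def rprod {V : Type} (A B : V → V → Prop) : V → V → Prop :=
  fun u v => ∃ w, A u w ∧ B w v

/-- Transpose of a relation. -/
def tr {V : Type} (A : V → V → Prop) : V → V → Prop := fun u v => A v u

/-- Weight of a finite set of vertices. -/
def wt {V : Type} {M : Type} [AddCommMonoid M] (ω : V → M) (S : Finset V) : M :=
  ∑ x ∈ S, ω x
/-- Reduction to the case `A ⊆ B`: with `A' = A ∩ B`, `B' = A ∪ B`, we have
`A' ∩ B'ᵀ = I`, `A' ⊆ B'`, `(A'B' ∪ B'A')(v) ⊆ (AB ∪ BA)(v)` and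
`|A'(v)| + |B'(v)| = |A(v)| + |B(v)|` for every `v`; consequently the conjecture for
`(A', B')` implies it for `(A, B)`. -/
theorem reduction_to_subset_case
    {V : Type} [Fintype V] (A B : V → V → Prop)
    (h1 : ∀ u v, (A u v ∧ B v u) ↔ u = v) :
    (∀ u v, ((fun u v => A u v ∧ B u v) u v ∧ (fun u v => A u v ∨ B u v) v u) ↔ u = v) ∧
    (∀ u v, (A u v ∧ B u v) → (A u v ∨ B u v)) ∧
    (∀ v, outs (fun u w =>
          rprod (fun p q => A p q ∧ B p q) (fun p q => A p q ∨ B p q) u w ∨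
          rprod (fun p q => A p q ∨ B p q) (fun p q => A p q ∧ B p q) u w) v ⊆
        outs (fun u w => rprod A B u w ∨ rprod B A u w) v) ∧
    (∀ v, (outs (fun u w => A u w ∧ B u w) v).card + (outs (fun u w => A u w ∨ B u w) v).card
        = (outs A v).card + (outs B v).card) ∧
    ((∃ v, (outs (fun u w =>
          rprod (fun p q => A p q ∧ B p q) (fun p q => A p q ∨ B p q) u w ∨
          rprod (fun p q => A p q ∨ B p q) (fun p q => A p q ∧ B p q) u w) v).card ≥
        (outs (fun u w => A u w ∧ B u w) v).card +
        (outs (fun u w => A u w ∨ B u w) v).card - 1) →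
      ∃ v, (outs (fun u w => rprod A B u w ∨ rprod B A u w) v).card ≥
        (outs A v).card + (outs B v).card - 1) := by

  have key1 : ∀ u v, ((A u v ∧ B u v) ∧ (A v u ∨ B v u)) ↔ u = v := by
    intro u v
    constructor
    · rintro ⟨⟨ha, hb⟩, h | h⟩
      · exact ((h1 v u).mp ⟨h, hb⟩).symm
      · exact (h1 u v).mp ⟨ha, h⟩
    · rintro rfl
      have := (h1 u u).mpr rfl
      exact ⟨⟨this.1, this.2⟩, Or.inl this.1⟩
  have key3 : ∀ v, outs (fun u w =>
          rprod (fun p q => A p q ∧ B p q) (fun p q => A p q ∨ B p q) u w ∨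
          rprod (fun p q => A p q ∨ B p q) (fun p q => A p q ∧ B p q) u w) v ⊆
        outs (fun u w => rprod A B u w ∨ rprod B A u w) v := by
    intro v x hx
    have hx := ((@Finset.mem_filter _ _ (fun _ => Classical.propDecidable _) _ _).mp hx).2
    refine (@Finset.mem_filter _ _ (fun _ => Classical.propDecidable _) _ _).mpr ⟨mem_univ _, ?_⟩
    simp only [rprod] at hx ⊢
    rcases hx with ⟨w, ⟨ha, hb⟩, hc | hc⟩ | ⟨w, hc | hc, ha, hb⟩
    · exact Or.inr ⟨w, hb, hc⟩
    · exact Or.inl ⟨w, ha, hc⟩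
    · exact Or.inl ⟨w, hc, hb⟩
    · exact Or.inr ⟨w, hc, ha⟩
  have key4 : ∀ v, (outs (fun u w => A u w ∧ B u w) v).card + (outs (fun u w => A u w ∨ B u w) v).card
        = (outs A v).card + (outs B v).card := by
    intro v
    have h2 : outs (fun u w => A u w ∧ B u w) v = outs A v ∩ outs B v := by
      ext x; simp [outs]
    have h3 : outs (fun u w => A u w ∨ B u w) v = outs A v ∪ outs B v := by
      ext x; simp [outs]
    rw [h2, h3, card_inter_add_card_union]
  refine ⟨key1, fun u v h => Or.inl h.1, key3, key4, ?_⟩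
  rintro ⟨v, hv⟩
  exact ⟨v, le_trans (le_trans (by rw [key4 v]) hv) (card_le_card (key3 v))⟩
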